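/- Let 0 ≤ k < m and let (ν; μ) be an m-standard composite partition with l(ν) = k and l(μ) < m − k. Let λ := (μ_1, …, μ_{m−k}, 1−ν_k, 1−ν_{k−1}, …, 1−ν_1) (where μ_i := 0 for i > l(μ)), an integral dominant weight of size m with λ_{m−k} = 0. Then in F: Σ_{i=0}^{m−1} ( Σ_{η ∈ A_{m−k,i}} s_η ) · y^{m−1−i−k} = Σ_{(α,β)} e_m(x) · s_{α ∪_m β̄} · y^{a−b}, where A_{m−k,i} is the set of integral dominant weights η of size m with η_j − λ_j ∈ {0,1} for all j, Σ_{j=1}^m (η_j − λ_j) = i + 1 and η_{m−k} − λ_{m−k} = 1, and where the right-hand sum runs over all pairs of partitions (α, β) with μ_i − α_i ∈ {0,1} for all i ≥ 1 and ν_i − β_i ∈ {0,1} for all i ≥ 1, with a := |μ| − |α|, b := |ν| − |β|. -/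

import Mathlib

open scoped Classical

noncomputable section

/-- The field `F = ℚ(x_1, …, x_m, y)` of rational functions in `m+1` indeterminates. -/
abbrev F (m : ℕ) : Type := FractionRing (MvPolynomial (Option (Fin m)) ℚ)

/-- The variable `x_i` as an element of `F`. -/
def Xv (m : ℕ) (i : Fin m) : F m :=
  algebraMap (MvPolynomial (Option (Fin m)) ℚ) (F m) (MvPolynomial.X (some i))

/-- The variable `y` as an element of `F`. -/
def Yv (m : ℕ) : F m :=
  algebraMap (MvPolynomial (Option (Fin m)) ℚ) (F m) (MvPolynomial.X none)

/-- `a_α = ∑_{w ∈ S_m} ε(w) · w(x₁^{α₁} ⋯ x_m^{α_m})`, where `w` permutes the variables. -/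
def aAlt (m : ℕ) (α : Fin m → ℤ) : F m :=
  ∑ w : Equiv.Perm (Fin m), (Equiv.Perm.sign w : ℤ) • ∏ i, Xv m (w i) ^ α i

/-- `δ = (m-1, m-2, …, 1, 0)`. -/
def deltaW (m : ℕ) : Fin m → ℤ := fun i => (m : ℤ) - 1 - (i : ℕ)

/-- The Schur function `s_λ = a_{λ+δ} / a_δ` of an integral dominant weight. -/
def schurW (m : ℕ) (lam : Fin m → ℤ) : F m :=
  aAlt m (fun i => lam i + deltaW m i) / aAlt m (deltaW m)

/-- The elementary symmetric polynomial `e_i(x_1, …, x_m)` in `F`. -/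
def eX (m : ℕ) (i : ℕ) : F m :=
  ∑ s ∈ Finset.powersetCard i (Finset.univ : Finset (Fin m)), ∏ j ∈ s, Xv m j

/-- The complete homogeneous symmetric polynomial `h_r(x_1, …, x_m)` in `F`. -/
def hXF (m : ℕ) (r : ℕ) : F m :=
  ∑ d ∈ (Finset.univ : Finset (Fin m)).sym r, ((d : Multiset (Fin m)).map (Xv m)).prod

/-- `ḣ_r(x) = h_r(x_1⁻¹, …, x_m⁻¹)`. -/
def hdotXF (m : ℕ) (r : ℕ) : F m :=
  ∑ d ∈ (Finset.univ : Finset (Fin m)).sym r,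
    ((d : Multiset (Fin m)).map (fun j => (Xv m j)⁻¹)).prod

/-- `h_r(x)` for `r : ℤ`, with `h_r = 0` for `r < 0`. -/
def hXZ (m : ℕ) (r : ℤ) : F m := if 0 ≤ r then hXF m r.toNat else 0

/-- `ḣ_r(x)` for `r : ℤ`, with `ḣ_r = 0` for `r < 0`. -/
def hdotXZ (m : ℕ) (r : ℤ) : F m := if 0 ≤ r then hdotXF m r.toNat else 0

/-- The complete super-symmetric function `h_r(x/y) = ∑_{k=0}^r h_k(x) y^{r-k}` (`0` for `r < 0`). -/
def hSup (m : ℕ) (r : ℤ) : F m :=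
  if 0 ≤ r then ∑ k ∈ Finset.range (r.toNat + 1), hXF m k * Yv m ^ (r.toNat - k) else 0

/-- `ḣ_r(x/y) = ∑_{k=0}^r ḣ_k(x) y^{-(r-k)}` (`0` for `r < 0`). -/
def hdotSup (m : ℕ) (r : ℤ) : F m :=
  if 0 ≤ r then ∑ k ∈ Finset.range (r.toNat + 1), hdotXF m k * (Yv m)⁻¹ ^ (r.toNat - k) else 0

/-- The super-symmetric function `s_{(ν;μ)}(x/y)` of a composite partition `(ν; μ)` with
`q = l(ν)`, `p = l(μ)`, given as the `(q+p) × (q+p)` block determinant (0-based indices). -/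
def sSup (m : ℕ) (ν μ : ℕ → ℕ) (q p : ℕ) : F m :=
  Matrix.det (Matrix.of fun r c : Fin (q + p) =>
    if (c : ℕ) < q then hdotSup m ((ν (q - 1 - (c : ℕ)) : ℤ) + (c : ℕ) - (r : ℕ))
    else hSup m ((μ ((c : ℕ) - q) : ℤ) + (r : ℕ) - (c : ℕ)))

/-- `s^{det}_{(ν;μ)}(x)`: the same block determinant built from `h_s(x)` and `ḣ_s(x)`. -/
def sDet (m : ℕ) (ν μ : ℕ → ℕ) (q p : ℕ) : F m :=
  Matrix.det (Matrix.of fun r c : Fin (q + p) =>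
    if (c : ℕ) < q then hdotXZ m ((ν (q - 1 - (c : ℕ)) : ℤ) + (c : ℕ) - (r : ℕ))
    else hXZ m ((μ ((c : ℕ) - q) : ℤ) + (r : ℕ) - (c : ℕ)))

/-- An integral dominant weight of size `m`: `λ_1 ≥ λ_2 ≥ ⋯ ≥ λ_m`. -/
def IsDom (m : ℕ) (lam : Fin m → ℤ) : Prop := ∀ i j : Fin m, i ≤ j → lam j ≤ lam i

/-- `f` is (the part function of) a partition with exactly `q` (positive) parts,
0-based indexing: the parts are `f 0 ≥ f 1 ≥ ⋯`. -/
def IsPartitionOfLen (f : ℕ → ℕ) (q : ℕ) : Prop :=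
  (∀ i j : ℕ, i ≤ j → f j ≤ f i) ∧ (∀ i : ℕ, 0 < f i ↔ i < q)

end

/-- The integral dominant weight `α ∪_m β̄ = (α_1, …, α_{l(α)}, 0, …, 0, -β_{l(β)}, …, -β_1)`
attached to an `m`-standard composite partition `(β; α)` (0-based indices): its `i`-th
entry is `α_i - β_{m-1-i}`. -/
def cupW (m : ℕ) (α β : ℕ → ℕ) : Fin m → ℤ := fun i =>
  (α (i : ℕ) : ℤ) - (β (m - 1 - (i : ℕ)) : ℤ)

/-- The integral dominant weight `λ = (μ_1, …, μ_{m-k}, 1-ν_k, …, 1-ν_1)` attached to an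
`m`-standard composite partition `(ν; μ)` with `l(ν) = k`, `l(μ) ≤ m - k`
(0-based indices, `μ_i := 0` for `i > l(μ)`). -/
def lamOfPair (m k : ℕ) (ν μ : ℕ → ℕ) : Fin m → ℤ := fun j =>
  if (j : ℕ) < m - k then (μ (j : ℕ) : ℤ) else 1 - (ν (m - 1 - (j : ℕ)) : ℤ)

noncomputable section AuxProofStuff

def etaS (m k : ℕ) (ν μ : ℕ → ℕ) (S : Finset (Fin m)) : Fin m → ℤ :=
  fun j => lamOfPair m k ν μ j + if j ∈ S then 1 else 0

def alS (m k : ℕ) (μ : ℕ → ℕ) (S : Finset (Fin m)) : ℕ → ℕ :=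
  fun j => if h : j < m - k then (if (⟨j, by omega⟩ : Fin m) ∈ S then μ j else μ j - 1) else 0

def beS (m k : ℕ) (ν : ℕ → ℕ) (S : Finset (Fin m)) : ℕ → ℕ :=
  fun j => if h : j < k ∧ j < m then
    (if (⟨m - 1 - j, by omega⟩ : Fin m) ∈ S then ν j - 1 else ν j) else 0

def Dset (m k : ℕ) (ν μ : ℕ → ℕ) : Finset (Finset (Fin m)) :=
  Finset.univ.filter (fun S => IsDom m (etaS m k ν μ S) ∧
    ∀ h : m - k - 1 < m, (⟨m - k - 1, h⟩ : Fin m) ∈ S)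

section Lems

variable {m k p : ℕ} {ν μ : ℕ → ℕ} {S : Finset (Fin m)}

lemma part_zero {f : ℕ → ℕ} {q : ℕ} (hf : IsPartitionOfLen f q) {i : ℕ} (h : q ≤ i) :
    f i = 0 := by have := hf.2 i; omega

lemma part_pos {f : ℕ → ℕ} {q : ℕ} (hf : IsPartitionOfLen f q) {i : ℕ} (h : i < q) :
    1 ≤ f i := (hf.2 i).2 h

lemma mem_Dset : S ∈ Dset m k ν μ ↔ IsDom m (etaS m k ν μ S) ∧
    ∀ h : m - k - 1 < m, (⟨m - k - 1, h⟩ : Fin m) ∈ S := by simp [Dset]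

lemma etaS_lt {j : Fin m} (hx : (j : ℕ) < m - k) :
    etaS m k ν μ S j = (μ (j : ℕ) : ℤ) + (if j ∈ S then 1 else 0) := by
  simp [etaS, lamOfPair, hx]

lemma etaS_ge {j : Fin m} (hx : ¬ (j : ℕ) < m - k) :
    etaS m k ν μ S j = 1 - (ν (m - 1 - (j : ℕ)) : ℤ) + (if j ∈ S then 1 else 0) := by
  simp [etaS, lamOfPair, hx]

lemma mem_of_mid (hk : k < m) (hp : IsPartitionOfLen μ p) (hpk : p < m - k)
    (hS : S ∈ Dset m k ν μ) {j : ℕ} (hj1 : p ≤ j) (hj2 : j < m - k) :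
    (⟨j, by omega⟩ : Fin m) ∈ S := by
  obtain ⟨hdom, hbase⟩ := mem_Dset.1 hS
  have hb := hbase (by omega)
  have hle : (⟨j, by omega⟩ : Fin m) ≤ (⟨m - k - 1, by omega⟩ : Fin m) := by
    simp [Fin.le_def]; omega
  have hd := hdom _ _ hle
  rw [etaS_lt (by simp; omega), etaS_lt (by simp; omega)] at hd
  have h1 : μ (m - k - 1) = 0 := part_zero hp (by omega)
  have h2 : μ j = 0 := part_zero hp hj1
  simp [hb, h1, h2] at hd
  by_contra hns
  simp [hns] at hd


lemma partition_of_antitone {f : ℕ → ℕ} (hf : ∀ i j : ℕ, i ≤ j → f j ≤ f i) {N : ℕ}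
    (hN : f N = 0) : ∃ q, IsPartitionOfLen f q := by
  have hex : ∃ n, f n = 0 := ⟨N, hN⟩
  refine ⟨Nat.find hex, hf, fun i => ?_⟩
  constructor
  · intro hpos
    by_contra hlt
    push_neg at hlt
    have := hf _ _ hlt
    rw [Nat.find_spec hex] at this
    omega
  · intro hi
    have := Nat.find_min hex hi
    omega

lemma alS_lt {j : ℕ} (hj : j < m - k) :
    alS m k μ S j = if (⟨j, by omega⟩ : Fin m) ∈ S then μ j else μ j - 1 := by
  simp only [alS, dif_pos hj]

lemma alS_ge {j : ℕ} (hj : ¬ j < m - k) : alS m k μ S j = 0 := by simp [alS, hj]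

lemma beS_lt {j : ℕ} (hj : j < k) (hj2 : j < m) :
    beS m k ν S j = if (⟨m - 1 - j, by omega⟩ : Fin m) ∈ S then ν j - 1 else ν j := by
  simp only [beS, dif_pos (show j < k ∧ j < m from ⟨hj, hj2⟩)]

lemma beS_ge {j : ℕ} (hj : ¬ (j < k ∧ j < m)) : beS m k ν S j = 0 := by simp [beS, hj]

lemma etaS_inj {T : Finset (Fin m)} (h : etaS m k ν μ S = etaS m k ν μ T) : S = T := by
  ext j
  have hj := congrFun h j
  simp only [etaS, add_right_inj] at hj
  by_cases h1 : j ∈ S <;> by_cases h2 : j ∈ T <;> simp [h1, h2] at hj ⊢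


lemma alS_anti (hk : k < m) (hS : S ∈ Dset m k ν μ) :
    ∀ i j : ℕ, i ≤ j → alS m k μ S j ≤ alS m k μ S i := by
  intro i j hij
  by_cases hj : j < m - k
  · have hi : i < m - k := by omega
    obtain ⟨hdom, -⟩ := mem_Dset.1 hS
    have hd := hdom ⟨i, by omega⟩ ⟨j, by omega⟩ (by simpa [Fin.le_def] using hij)
    rw [etaS_lt (by simpa using hj), etaS_lt (by simpa using hi)] at hd
    rw [alS_lt hi, alS_lt hj]
    by_cases hiS : (⟨i, by omega⟩ : Fin m) ∈ S <;>
      by_cases hjS : (⟨j, by omega⟩ : Fin m) ∈ S <;>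
      simp only [hiS, hjS, if_true, if_false, if_pos, if_neg] at hd ⊢ <;>
      simp at hd <;> omega
  · rw [alS_ge hj]; omega

lemma beS_anti (hk : k < m) (hν : IsPartitionOfLen ν k) (hS : S ∈ Dset m k ν μ) :
    ∀ i j : ℕ, i ≤ j → beS m k ν S j ≤ beS m k ν S i := by
  intro i j hij
  by_cases hj : j < k
  · have hi : i < k := by omega
    obtain ⟨hdom, -⟩ := mem_Dset.1 hS
    have hd := hdom ⟨m - 1 - j, by omega⟩ ⟨m - 1 - i, by omega⟩
      (by simp [Fin.le_def]; omega)
    rw [etaS_ge (by simp; omega), etaS_ge (by simp; omega)] at hd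
    simp only [show m - 1 - (m - 1 - i) = i by omega, show m - 1 - (m - 1 - j) = j by omega] at hd
    rw [beS_lt hi (by omega), beS_lt hj (by omega)]
    have hνi := part_pos hν hi
    have hνj := part_pos hν hj
    by_cases hiS : (⟨m - 1 - i, by omega⟩ : Fin m) ∈ S <;>
      by_cases hjS : (⟨m - 1 - j, by omega⟩ : Fin m) ∈ S <;>
      simp only [hiS, hjS, if_true, if_false, if_pos, if_neg] at hd ⊢ <;>
      simp at hd <;> omega
  · rw [beS_ge (by omega)]; omega

lemma alS_diff (hk : k < m) (hp : IsPartitionOfLen μ p) (hpk : p < m - k)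
    (hS : S ∈ Dset m k ν μ) : ∀ i, alS m k μ S i = μ i ∨ alS m k μ S i + 1 = μ i := by
  intro i
  by_cases hi : i < m - k
  · rw [alS_lt hi]
    by_cases hiS : (⟨i, by omega⟩ : Fin m) ∈ S
    · simp [hiS]
    · have hip : i < p := by
        by_contra hcon
        exact hiS (mem_of_mid hk hp hpk hS (by omega) hi)
      have := part_pos hp hip
      simp only [hiS, if_false, if_neg]
      right; omega
  · rw [alS_ge hi]
    left
    exact (part_zero hp (by omega)).symm

lemma beS_diff (hk : k < m) (hν : IsPartitionOfLen ν k) (hS : S ∈ Dset m k ν μ) :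
    ∀ i, beS m k ν S i = ν i ∨ beS m k ν S i + 1 = ν i := by
  intro i
  by_cases hi : i < k
  · rw [beS_lt hi (by omega)]
    by_cases hiS : (⟨m - 1 - i, by omega⟩ : Fin m) ∈ S
    · have := part_pos hν hi
      simp only [hiS, if_true, if_pos]
      right; omega
    · simp [hiS]
  · rw [beS_ge (by omega)]
    left
    exact (part_zero hν (by omega)).symm

lemma exists_part_alS (hk : k < m) (hS : S ∈ Dset m k ν μ) :
    ∃ la, IsPartitionOfLen (alS m k μ S) la :=
  partition_of_antitone (alS_anti hk hS) (alS_ge (j := m - k) (by omega))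

lemma exists_part_beS (hk : k < m) (hν : IsPartitionOfLen ν k) (hS : S ∈ Dset m k ν μ) :
    ∃ lb, IsPartitionOfLen (beS m k ν S) lb :=
  partition_of_antitone (beS_anti hk hν hS) (beS_ge (j := k) (by omega))


lemma etaS_eq_cup (hk : k < m) (hν : IsPartitionOfLen ν k) (hp : IsPartitionOfLen μ p)
    (hpk : p < m - k) (hS : S ∈ Dset m k ν μ) :
    etaS m k ν μ S = fun i => cupW m (alS m k μ S) (beS m k ν S) i + 1 := by
  funext i
  have hilt := i.isLt
  by_cases hi : (i : ℕ) < m - k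
  · rw [etaS_lt hi]
    have hbz : beS m k ν S (m - 1 - (i : ℕ)) = 0 := beS_ge (by omega)
    simp only [cupW, hbz, Nat.cast_zero, sub_zero]
    rw [alS_lt hi]
    by_cases hiS : i ∈ S
    · simp [Fin.eta, hiS]
    · have hip : (i : ℕ) < p := by
        by_contra hcon
        exact hiS (by simpa [Fin.eta] using mem_of_mid hk hp hpk hS (by omega) hi)
      have := part_pos hp hip
      simp only [Fin.eta, hiS, if_false, if_neg]
      push_cast [this]
      omega
  · rw [etaS_ge hi]
    have haz : alS m k μ S (i : ℕ) = 0 := alS_ge hi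
    simp only [cupW, haz, Nat.cast_zero, zero_sub]
    rw [beS_lt (show m - 1 - (i : ℕ) < k by omega) (by omega)]
    have hfin : (⟨m - 1 - (m - 1 - (i : ℕ)), by omega⟩ : Fin m) = i := by
      apply Fin.ext; simp; omega
    rw [hfin]
    have hν1 := part_pos hν (show m - 1 - (i : ℕ) < k by omega)
    by_cases hiS : i ∈ S
    · simp only [hiS, if_true, if_pos]
      push_cast [hν1]
      omega
    · simp only [hiS, if_false, if_neg]
      push_cast
      omega


lemma inj_on_D (hk : k < m) (hν : IsPartitionOfLen ν k) (hp : IsPartitionOfLen μ p)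
    (hpk : p < m - k) {T : Finset (Fin m)} (hS : S ∈ Dset m k ν μ) (hT : T ∈ Dset m k ν μ)
    (hA : alS m k μ S = alS m k μ T) (hB : beS m k ν S = beS m k ν T) : S = T := by
  ext j
  have hjl := j.isLt
  by_cases hj : (j : ℕ) < m - k
  · by_cases hjp : (j : ℕ) < p
    · have h1 := congrFun hA (j : ℕ)
      rw [alS_lt hj, alS_lt hj] at h1
      simp only [Fin.eta] at h1
      have hμ := part_pos hp hjp
      by_cases h2 : j ∈ S <;> by_cases h3 : j ∈ T <;>
        simp only [h2, h3, if_true, if_false, if_pos, if_neg] at h1 ⊢ <;> omega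
    · constructor <;> intro _
      · simpa [Fin.eta] using mem_of_mid hk hp hpk hT (by omega) hj
      · simpa [Fin.eta] using mem_of_mid hk hp hpk hS (by omega) hj
  · have h1 := congrFun hB (m - 1 - (j : ℕ))
    have hfin : (⟨m - 1 - (m - 1 - (j : ℕ)), by omega⟩ : Fin m) = j := by
      apply Fin.ext; simp; omega
    have eS : beS m k ν S (m - 1 - (j : ℕ)) =
        (if j ∈ S then ν (m - 1 - (j : ℕ)) - 1 else ν (m - 1 - (j : ℕ))) := by
      rw [beS_lt (show m - 1 - (j : ℕ) < k by omega) (by omega), hfin]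
    have eT : beS m k ν T (m - 1 - (j : ℕ)) =
        (if j ∈ T then ν (m - 1 - (j : ℕ)) - 1 else ν (m - 1 - (j : ℕ))) := by
      rw [beS_lt (show m - 1 - (j : ℕ) < k by omega) (by omega), hfin]
    rw [eS, eT] at h1
    have hν1 := part_pos hν (show m - 1 - (j : ℕ) < k by omega)
    by_cases h2 : j ∈ S <;> by_cases h3 : j ∈ T <;>
      simp only [h2, h3, if_true, if_false, if_pos, if_neg] at h1 ⊢ <;> omega

lemma exists_S (hk : k < m) (hν : IsPartitionOfLen ν k) (hp : IsPartitionOfLen μ p)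
    (hpk : p < m - k) {α β : ℕ → ℕ} (hα : ∃ la, IsPartitionOfLen α la)
    (hβ : ∃ lb, IsPartitionOfLen β lb)
    (hdα : ∀ i, α i = μ i ∨ α i + 1 = μ i) (hdβ : ∀ i, β i = ν i ∨ β i + 1 = ν i) :
    ∃ S ∈ Dset m k ν μ, alS m k μ S = α ∧ beS m k ν S = β := by
  obtain ⟨la, hα⟩ := hα
  obtain ⟨lb, hβ⟩ := hβ
  have hαz : ∀ i, p ≤ i → α i = 0 := by
    intro i hi
    have := part_zero hp hi
    rcases hdα i with h | h <;> omega
  have hβz : ∀ i, k ≤ i → β i = 0 := by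
    intro i hi
    have := part_zero hν hi
    rcases hdβ i with h | h <;> omega
  set S : Finset (Fin m) := Finset.univ.filter (fun j : Fin m =>
    if (j : ℕ) < m - k then α (j : ℕ) = μ (j : ℕ)
    else β (m - 1 - (j : ℕ)) + 1 = ν (m - 1 - (j : ℕ))) with hSdef
  have hmem : ∀ j : Fin m, j ∈ S ↔
      (if (j : ℕ) < m - k then α (j : ℕ) = μ (j : ℕ)
       else β (m - 1 - (j : ℕ)) + 1 = ν (m - 1 - (j : ℕ))) := by
    intro j; simp [hSdef]
  -- value of etaS on S
  have hval1 : ∀ j : Fin m, (j : ℕ) < m - k → etaS m k ν μ S j = (α (j : ℕ) : ℤ) + 1 := by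
    intro j hj
    rw [etaS_lt hj]
    by_cases hjS : j ∈ S
    · have := (hmem j).1 hjS
      rw [if_pos hj] at this
      simp [hjS, this]
    · have := (hmem j)
      rw [if_pos hj] at this
      have hne : ¬ α (j : ℕ) = μ (j : ℕ) := fun hcon => hjS (this.2 hcon)
      rcases hdα (j : ℕ) with h | h
      · exact absurd h hne
      · simp [hjS]; omega
  have hval2 : ∀ j : Fin m, ¬ (j : ℕ) < m - k →
      etaS m k ν μ S j = 1 - (β (m - 1 - (j : ℕ)) : ℤ) := by
    intro j hj
    rw [etaS_ge hj]
    by_cases hjS : j ∈ S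
    · have := (hmem j).1 hjS
      rw [if_neg hj] at this
      simp only [hjS, if_true, if_pos]
      omega
    · have := (hmem j)
      rw [if_neg hj] at this
      have hne : ¬ β (m - 1 - (j : ℕ)) + 1 = ν (m - 1 - (j : ℕ)) :=
        fun hcon => hjS (this.2 hcon)
      rcases hdβ (m - 1 - (j : ℕ)) with h | h
      · simp only [hjS, if_false, if_neg]; omega
      · exact absurd h hne
  refine ⟨S, ?_, ?_, ?_⟩
  · rw [mem_Dset]
    constructor
    · intro i j hij
      have hij' : (i : ℕ) ≤ (j : ℕ) := hij
      by_cases hj : (j : ℕ) < m - k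
      · have hi : (i : ℕ) < m - k := by omega
        rw [hval1 i hi, hval1 j hj]
        have := hα.1 (i : ℕ) (j : ℕ) hij'
        omega
      · by_cases hi : (i : ℕ) < m - k
        · rw [hval1 i hi, hval2 j hj]
          omega
        · rw [hval2 i hi, hval2 j hj]
          have := hβ.1 (m - 1 - (j : ℕ)) (m - 1 - (i : ℕ)) (by omega)
          omega
    · intro h
      rw [hmem]
      have hlt : m - k - 1 < m - k := by omega
      simp only [if_pos hlt]
      have h1 : μ (m - k - 1) = 0 := part_zero hp (by omega)
      have h2 : α (m - k - 1) = 0 := hαz _ (by omega)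
      omega
  · funext i
    by_cases hi : i < m - k
    · rw [alS_lt hi]
      have := hmem ⟨i, by omega⟩
      rw [if_pos hi] at this
      by_cases hiS : (⟨i, by omega⟩ : Fin m) ∈ S
      · rw [if_pos hiS]; exact (this.1 hiS).symm
      · rw [if_neg hiS]
        have hne : ¬ α i = μ i := fun hcon => hiS (this.2 hcon)
        rcases hdα i with h | h
        · exact absurd h hne
        · omega
    · rw [alS_ge hi]
      exact (hαz i (by omega)).symm
  · funext i
    by_cases hi : i < k
    · rw [beS_lt hi (by omega)]
      have := hmem ⟨m - 1 - i, by omega⟩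
      rw [if_neg (by simp; omega)] at this
      simp only [show m - 1 - (m - 1 - i) = i by omega] at this
      by_cases hiS : (⟨m - 1 - i, by omega⟩ : Fin m) ∈ S
      · rw [if_pos hiS]
        have := this.1 hiS
        omega
      · rw [if_neg hiS]
        have hne : ¬ β i + 1 = ν i := fun hcon => hiS (this.2 hcon)
        rcases hdβ i with h | h
        · exact h.symm
        · exact absurd h hne
    · rw [beS_ge (by omega)]
      exact (hβz i (by omega)).symm


lemma etaS_diff (j : Fin m) :
    etaS m k ν μ S j - lamOfPair m k ν μ j = 0 ∨ etaS m k ν μ S j - lamOfPair m k ν μ j = 1 := by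
  simp only [etaS, add_sub_cancel_left]
  split <;> simp

lemma etaS_base (hk : k < m) (hS : S ∈ Dset m k ν μ) (h : m - k - 1 < m) :
    etaS m k ν μ S ⟨m - k - 1, h⟩ - lamOfPair m k ν μ ⟨m - k - 1, h⟩ = 1 := by
  have hb := (mem_Dset.1 hS).2 h
  simp [etaS, hb]

lemma card_sum :
    (∑ j : Fin m, (etaS m k ν μ S j - lamOfPair m k ν μ j)) = (S.card : ℤ) := by
  simp only [etaS, add_sub_cancel_left]
  rw [Finset.sum_ite_mem, Finset.univ_inter, Finset.sum_const]
  simp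

lemma eta_mem_image (hk : k < m) {η : Fin m → ℤ} {i : ℕ}
    (hdom : IsDom m η)
    (hdiff : ∀ j : Fin m, η j - lamOfPair m k ν μ j = 0 ∨ η j - lamOfPair m k ν μ j = 1)
    (hsum : (∑ j : Fin m, (η j - lamOfPair m k ν μ j)) = (i : ℤ) + 1)
    (hbase : ∀ h : m - k - 1 < m,
      η ⟨m - k - 1, h⟩ - lamOfPair m k ν μ ⟨m - k - 1, h⟩ = 1) :
    ∃ S ∈ Dset m k ν μ, etaS m k ν μ S = η ∧ S.card = i + 1 := by
  set S : Finset (Fin m) :=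
    Finset.univ.filter (fun j : Fin m => η j - lamOfPair m k ν μ j = 1) with hSdef
  have heta : etaS m k ν μ S = η := by
    funext j
    by_cases hj : η j - lamOfPair m k ν μ j = 1
    · have hjS : j ∈ S := by simp [hSdef, hj]
      simp only [etaS, hjS, if_true, if_pos]
      omega
    · have hjS : j ∉ S := by simp [hSdef, hj]
      rcases hdiff j with h | h
      · simp only [etaS, hjS, if_false, if_neg]
        omega
      · exact absurd h hj
  refine ⟨S, ?_, heta, ?_⟩
  · rw [mem_Dset]
    refine ⟨by rw [heta]; exact hdom, fun h => ?_⟩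
    simp only [hSdef, Finset.mem_filter, Finset.mem_univ, true_and]
    exact hbase h
  · have hc := card_sum (m := m) (k := k) (ν := ν) (μ := μ) (S := S)
    rw [heta, hsum] at hc
    omega

lemma exponent_eq (hk : k < m) (hν : IsPartitionOfLen ν k) (hp : IsPartitionOfLen μ p)
    (hpk : p < m - k) (hS : S ∈ Dset m k ν μ) :
    (∑ᶠ i : ℕ, ((μ i : ℤ) - alS m k μ S i)) - (∑ᶠ i : ℕ, ((ν i : ℤ) - beS m k ν S i))
      = (m : ℤ) - k - S.card := by
  classical
  set εn : ℕ → ℤ := fun i => if h : i < m then (if (⟨i, h⟩ : Fin m) ∈ S then 1 else 0) else 0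
    with hεn
  have haA : (∑ᶠ i : ℕ, ((μ i : ℤ) - alS m k μ S i))
      = ∑ i ∈ Finset.range (m - k), ((μ i : ℤ) - alS m k μ S i) := by
    apply finsum_eq_sum_of_support_subset
    intro i hi
    simp only [Function.mem_support] at hi
    simp only [Finset.coe_range, Set.mem_Iio]
    by_contra hcon
    push_neg at hcon
    rw [alS_ge (by omega), part_zero hp (by omega)] at hi
    simp at hi
  have hbB : (∑ᶠ i : ℕ, ((ν i : ℤ) - beS m k ν S i))
      = ∑ i ∈ Finset.range k, ((ν i : ℤ) - beS m k ν S i) := by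
    apply finsum_eq_sum_of_support_subset
    intro i hi
    simp only [Function.mem_support] at hi
    simp only [Finset.coe_range, Set.mem_Iio]
    by_contra hcon
    push_neg at hcon
    rw [beS_ge (by omega), part_zero hν (by omega)] at hi
    simp at hi
  have haA' : ∑ i ∈ Finset.range (m - k), ((μ i : ℤ) - alS m k μ S i)
      = ∑ i ∈ Finset.range (m - k), (1 - εn i) := by
    refine Finset.sum_congr rfl fun i hi => ?_
    rw [Finset.mem_range] at hi
    rw [alS_lt hi, hεn]
    simp only [dif_pos (show i < m by omega)]
    by_cases hiS : (⟨i, by omega⟩ : Fin m) ∈ S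
    · simp [hiS]
    · have hip : i < p := by
        by_contra hcon
        exact hiS (mem_of_mid hk hp hpk hS (by omega) hi)
      have := part_pos hp hip
      simp only [hiS, if_false, if_neg]
      push_cast [this]
      ring
  have hbB' : ∑ i ∈ Finset.range k, ((ν i : ℤ) - beS m k ν S i)
      = ∑ i ∈ Finset.range k, εn (m - 1 - i) := by
    refine Finset.sum_congr rfl fun i hi => ?_
    rw [Finset.mem_range] at hi
    rw [beS_lt hi (by omega), hεn]
    simp only [dif_pos (show m - 1 - i < m by omega)]
    have := part_pos hν hi
    by_cases hiS : (⟨m - 1 - i, by omega⟩ : Fin m) ∈ S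
    · simp only [hiS, if_true, if_pos]
      push_cast [this]
      ring
    · simp only [hiS, if_false, if_neg]
      push_cast
      ring
  have hcard : (S.card : ℤ) = ∑ i ∈ Finset.range m, εn i := by
    have h1 : (S.card : ℤ) = ∑ j : Fin m, (if j ∈ S then (1 : ℤ) else 0) := by
      rw [Finset.sum_ite_mem, Finset.univ_inter, Finset.sum_const]
      simp
    rw [h1, ← Fin.sum_univ_eq_sum_range εn]
    refine Finset.sum_congr rfl fun j _ => ?_
    rw [hεn]
    simp only [dif_pos j.isLt, Fin.eta]
  have hsplit : ∑ i ∈ Finset.range m, εn i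
      = (∑ i ∈ Finset.range (m - k), εn i) + ∑ i ∈ Finset.Ico (m - k) m, εn i := by
    rw [Finset.range_eq_Ico, Finset.range_eq_Ico]
    exact (Finset.sum_Ico_consecutive εn (Nat.zero_le (m - k)) (show m - k ≤ m by omega)).symm
  have hre : ∑ i ∈ Finset.Ico (m - k) m, εn i = ∑ i ∈ Finset.range k, εn (m - 1 - i) := by
    refine Finset.sum_nbij' (fun a => m - 1 - a) (fun a => m - 1 - a) ?_ ?_ ?_ ?_ ?_ <;>
      intro a ha <;>
      simp only [Finset.mem_Ico, Finset.mem_range] at ha ⊢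
    · omega
    · omega
    · omega
    · omega
    · congr 1
      omega
  have hconst : ∑ i ∈ Finset.range (m - k), ((1 : ℤ) - εn i)
      = ((m : ℤ) - k) - ∑ i ∈ Finset.range (m - k), εn i := by
    rw [Finset.sum_sub_distrib, Finset.sum_const, Finset.card_range]
    simp only [nsmul_eq_mul, mul_one]
    rw [Nat.cast_sub hk.le]
  rw [haA, hbB, haA', hbB', hconst, ← hre]
  have := hcard
  rw [hsplit] at this
  linarith


lemma Xv_ne_zero (m : ℕ) (i : Fin m) : Xv m i ≠ 0 := by
  simp only [Xv]
  intro h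
  have hinj := (IsFractionRing.injective (MvPolynomial (Option (Fin m)) ℚ) (F m))
  have h0 : (MvPolynomial.X (some i) : MvPolynomial (Option (Fin m)) ℚ) = 0 := by
    apply hinj
    simp only [map_zero]
    exact h
  exact MvPolynomial.X_ne_zero _ h0

lemma eX_top (m : ℕ) : eX m m = ∏ i, Xv m i := by
  have h := Finset.powersetCard_self (Finset.univ : Finset (Fin m))
  rw [Finset.card_fin] at h
  simp [eX, h]

lemma aAlt_succ (m : ℕ) (κ : Fin m → ℤ) :
    aAlt m (fun i => κ i + 1) = (∏ i, Xv m i) * aAlt m κ := by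
  unfold aAlt
  rw [Finset.mul_sum]
  refine Finset.sum_congr rfl fun w _ => ?_
  rw [mul_smul_comm]
  congr 1
  have hz : ∀ i : Fin m, Xv m (w i) ^ (κ i + 1) = Xv m (w i) * Xv m (w i) ^ κ i := by
    intro i; rw [zpow_add_one₀ (Xv_ne_zero m _), mul_comm]
  rw [Finset.prod_congr rfl (fun i _ => hz i), Finset.prod_mul_distrib,
    Equiv.prod_comp w (Xv m)]

lemma schurW_succ (m : ℕ) (κ : Fin m → ℤ) :
    schurW m (fun i => κ i + 1) = eX m m * schurW m κ := by
  unfold schurW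
  rw [eX_top, ← mul_div_assoc]
  congr 1
  have he : (fun i => κ i + 1 + deltaW m i) = (fun i => (κ i + deltaW m i) + 1) := by
    funext i; ring
  rw [he, aAlt_succ]

end Lems
end AuxProofStuff


/-- Equation (20) of the paper, the atypical case identity. For an
`m`-standard composite partition `(ν; μ)` with `l(ν) = k < m`, `l(μ) < m - k`, and
`λ = (μ_1, …, μ_{m-k}, 1-ν_k, …, 1-ν_1)` (so `λ_{m-k} = 0`):
`∑_{i=0}^{m-1} (∑_{η ∈ A_{m-k,i}} s_η(x)) y^{m-1-i-k} = ∑_{(α,β)} e_m(x) s_{(β;α)}(x) y^{a-b}`,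
where `A_{m-k,i}` consists of the integral dominant weights `η` of size `m` with
`η_j - λ_j ∈ {0,1}`, `∑_j (η_j - λ_j) = i + 1` and `η_{m-k} - λ_{m-k} = 1`, and the sum
on the right runs over pairs of partitions `(α, β)` with `μ_i - α_i ∈ {0,1}`,
`ν_i - β_i ∈ {0,1}`, with `a = |μ| - |α|`, `b = |ν| - |β|`. -/
theorem atypical_case_identity (m k : ℕ) (hm : 1 ≤ m) (hk : k < m) (ν μ : ℕ → ℕ)
    (hν : IsPartitionOfLen ν k) (p : ℕ) (hp : IsPartitionOfLen μ p) (hpk : p < m - k) :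
    (∑ i ∈ Finset.range m,
      (∑ᶠ η : Fin m → ℤ,
        if IsDom m η ∧
            (∀ j : Fin m, η j - lamOfPair m k ν μ j = 0 ∨ η j - lamOfPair m k ν μ j = 1) ∧
            (∑ j : Fin m, (η j - lamOfPair m k ν μ j)) = (i : ℤ) + 1 ∧
            η ⟨m - k - 1, by omega⟩ - lamOfPair m k ν μ ⟨m - k - 1, by omega⟩ = 1
        then schurW m η else 0) * Yv m ^ ((m : ℤ) - 1 - i - k)) =
    ∑ᶠ αβ : (ℕ → ℕ) × (ℕ → ℕ),
      if (∃ la, IsPartitionOfLen αβ.1 la) ∧ (∃ lb, IsPartitionOfLen αβ.2 lb) ∧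
          (∀ i, αβ.1 i = μ i ∨ αβ.1 i + 1 = μ i) ∧ (∀ i, αβ.2 i = ν i ∨ αβ.2 i + 1 = ν i)
      then eX m m * schurW m (cupW m αβ.1 αβ.2) *
        Yv m ^ ((∑ᶠ i : ℕ, ((μ i : ℤ) - αβ.1 i)) - ∑ᶠ i : ℕ, ((ν i : ℤ) - αβ.2 i))
      else 0 := by
  classical
  have hcard_le : ∀ S : Finset (Fin m), S ∈ Dset m k ν μ → S.card ≤ m := by
    intro S _
    simpa using Finset.card_le_univ S
  have hcard_pos : ∀ S : Finset (Fin m), S ∈ Dset m k ν μ → 1 ≤ S.card := by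
    intro S hS
    have := (mem_Dset.1 hS).2 (by omega)
    exact Finset.card_pos.2 ⟨_, this⟩
  -- Step 1: identify each inner finsum with a finite sum over a fiber of Dset
  have hL : ∀ i : ℕ,
      (∑ᶠ η : Fin m → ℤ,
        if IsDom m η ∧
            (∀ j : Fin m, η j - lamOfPair m k ν μ j = 0 ∨ η j - lamOfPair m k ν μ j = 1) ∧
            (∑ j : Fin m, (η j - lamOfPair m k ν μ j)) = (i : ℤ) + 1 ∧
            η ⟨m - k - 1, by omega⟩ - lamOfPair m k ν μ ⟨m - k - 1, by omega⟩ = 1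
        then schurW m η else 0)
      = ∑ S ∈ (Dset m k ν μ).filter (fun S => S.card = i + 1), schurW m (etaS m k ν μ S) := by
    intro i
    rw [finsum_eq_sum_of_support_subset _
      (s := ((Dset m k ν μ).filter (fun S => S.card = i + 1)).image (etaS m k ν μ))
      (by
        intro η hη
        simp only [Function.mem_support] at hη
        have hP : IsDom m η ∧
            (∀ j : Fin m, η j - lamOfPair m k ν μ j = 0 ∨ η j - lamOfPair m k ν μ j = 1) ∧
            (∑ j : Fin m, (η j - lamOfPair m k ν μ j)) = (i : ℤ) + 1 ∧
            η ⟨m - k - 1, by omega⟩ - lamOfPair m k ν μ ⟨m - k - 1, by omega⟩ = 1 := by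
          by_contra hcon
          rw [if_neg hcon] at hη
          exact hη rfl
        obtain ⟨hdom, hdiff, hsum, hbase⟩ := hP
        obtain ⟨S, hS, heta, hcardS⟩ := eta_mem_image hk hdom hdiff hsum (fun _ => hbase)
        simp only [Finset.coe_image, Set.mem_image, Finset.mem_coe, Finset.mem_filter]
        exact ⟨S, ⟨hS, hcardS⟩, heta⟩)]
    rw [Finset.sum_image (fun x _ y _ h => etaS_inj h)]
    refine Finset.sum_congr rfl fun S hS => ?_
    rw [Finset.mem_filter] at hS
    rw [if_pos]
    refine ⟨(mem_Dset.1 hS.1).1, fun j => etaS_diff j, ?_, etaS_base hk hS.1 (by omega)⟩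
    rw [card_sum, hS.2]
    push_cast
    ring
  -- Step 2: rewrite the LHS as a single sum over Dset
  have hmaps : ∀ S ∈ Dset m k ν μ, S.card - 1 ∈ Finset.range m := by
    intro S hS
    rw [Finset.mem_range]
    have := hcard_pos S hS
    have := hcard_le S hS
    omega
  have hLHS : (∑ i ∈ Finset.range m,
      (∑ᶠ η : Fin m → ℤ,
        if IsDom m η ∧
            (∀ j : Fin m, η j - lamOfPair m k ν μ j = 0 ∨ η j - lamOfPair m k ν μ j = 1) ∧
            (∑ j : Fin m, (η j - lamOfPair m k ν μ j)) = (i : ℤ) + 1 ∧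
            η ⟨m - k - 1, by omega⟩ - lamOfPair m k ν μ ⟨m - k - 1, by omega⟩ = 1
        then schurW m η else 0) * Yv m ^ ((m : ℤ) - 1 - i - k))
      = ∑ S ∈ Dset m k ν μ, schurW m (etaS m k ν μ S) * Yv m ^ ((m : ℤ) - k - S.card) := by
    rw [← Finset.sum_fiberwise_of_maps_to (g := fun S : Finset (Fin m) => S.card - 1) hmaps
      (f := fun S => schurW m (etaS m k ν μ S) * Yv m ^ ((m : ℤ) - k - S.card))]
    refine Finset.sum_congr rfl fun i hi => ?_
    rw [hL i, Finset.sum_mul]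
    rw [show (Dset m k ν μ).filter (fun S => S.card = i + 1)
        = (Dset m k ν μ).filter (fun S => S.card - 1 = i) from
      Finset.filter_congr fun S hS => by
        have := hcard_pos S hS
        constructor
        · intro h; omega
        · intro h; omega]
    refine Finset.sum_congr rfl fun S hS => ?_
    rw [Finset.mem_filter] at hS
    have hc1 := hcard_pos S hS.1
    congr 1
    have : ((m : ℤ) - 1 - i - k) = (m : ℤ) - k - S.card := by
      have : S.card = i + 1 := by omega
      rw [this]
      push_cast
      ring
    rw [this]
  rw [hLHS]
  -- Step 3: rewrite the RHS as a sum over Dset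
  rw [finsum_eq_sum_of_support_subset _
    (s := (Dset m k ν μ).image (fun S => (alS m k μ S, beS m k ν S)))
    (by
      intro ab hab
      simp only [Function.mem_support] at hab
      have hQ : (∃ la, IsPartitionOfLen ab.1 la) ∧ (∃ lb, IsPartitionOfLen ab.2 lb) ∧
          (∀ i, ab.1 i = μ i ∨ ab.1 i + 1 = μ i) ∧ (∀ i, ab.2 i = ν i ∨ ab.2 i + 1 = ν i) := by
        by_contra hcon
        rw [if_neg hcon] at hab
        exact hab rfl
      obtain ⟨S, hS, hA, hB⟩ := exists_S hk hν hp hpk hQ.1 hQ.2.1 hQ.2.2.1 hQ.2.2.2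
      simp only [Finset.coe_image, Set.mem_image, Finset.mem_coe]
      refine ⟨S, hS, ?_⟩
      rw [hA, hB])]
  rw [Finset.sum_image (fun x hx y hy h => inj_on_D hk hν hp hpk hx hy
    (congrArg Prod.fst h) (congrArg Prod.snd h))]
  refine Finset.sum_congr rfl fun S hS => ?_
  rw [if_pos ⟨exists_part_alS hk hS, exists_part_beS hk hν hS,
    alS_diff hk hp hpk hS, beS_diff hk hν hS⟩]
  rw [show ((∑ᶠ i : ℕ, ((μ i : ℤ) - alS m k μ S i))
      - ∑ᶠ i : ℕ, ((ν i : ℤ) - beS m k ν S i)) = (m : ℤ) - k - S.card from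
    exponent_eq hk hν hp hpk hS]
  rw [← schurW_succ, ← etaS_eq_cup hk hν hp hpk hS]
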